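/- Let Ω ⊂ ℝⁿ be a bounded smooth domain with n ≥ 1, μ, ν > 0, and let u, v ∈ C²(Ω̄) with v > 0 on Ω̄ satisfy 0 = Δv − μv + νu in Ω with ∂v/∂n = 0 on ∂Ω and u ≥ 0. Then ∫_Ω |∇v|²/v² dx ≤ μ|Ω|. -/

import Mathlib

open MeasureTheory Set
open scoped Manifold


lemma key1d {s : Set ℝ} (hs : IsOpen s) (hb : Bornology.IsBounded s)
    {f f' : ℝ → ℝ} (hf : ∀ x, HasDerivAt f (f' x) x) (hf' : Continuous f')
    (h0 : ∀ x ∈ frontier s, f x = 0) : ∫ x in s, f' x = 0 := by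
  classical
  obtain ⟨M, hM⟩ := hb.subset_closedBall 0
  have hMs : ∀ x ∈ s, |x| ≤ M := fun x hx => by
    simpa [Real.closedBall_eq_Icc, abs_le] using hM hx
  set A : ℝ → Set ℝ := fun x => {t | t ∉ s ∧ t < x} with hA
  set B : ℝ → Set ℝ := fun x => {t | t ∉ s ∧ x < t} with hB
  set a : ℝ → ℝ := fun x => sSup (A x) with ha
  set b : ℝ → ℝ := fun x => sInf (B x) with hbdef
  have hAne : ∀ x ∈ s, (A x).Nonempty := by
    intro x hx
    refine ⟨-(|M| + 1), ?_, ?_⟩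
    · intro h
      have h2 := hMs _ h
      have h1 : |(-(|M| + 1))| = |M| + 1 := by
        rw [abs_neg]; exact abs_of_nonneg (by positivity)
      rw [h1] at h2
      nlinarith [le_abs_self M]
    · nlinarith [abs_le.1 (hMs x hx), le_abs_self M]
  have hBne : ∀ x ∈ s, (B x).Nonempty := by
    intro x hx
    refine ⟨|M| + 1, ?_, ?_⟩
    · intro h
      have h2 := hMs _ h
      have h1 : |(|M| + 1)| = |M| + 1 := abs_of_nonneg (by positivity)
      rw [h1] at h2
      nlinarith [le_abs_self M]
    · nlinarith [abs_le.1 (hMs x hx), le_abs_self M]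
  have hAbdd : ∀ x : ℝ, BddAbove (A x) := fun x =>
    ⟨x, fun t ht => ht.2.le⟩
  have hBbdd : ∀ x : ℝ, BddBelow (B x) := fun x =>
    ⟨x, fun t ht => ht.2.le⟩
  have halt : ∀ x ∈ s, a x < x := by
    intro x hx
    obtain ⟨ε, hε, hball⟩ := Metric.isOpen_iff.1 hs x hx
    have : a x ≤ x - ε / 2 := by
      apply csSup_le (hAne x hx)
      intro t ht
      by_contra hlt
      push_neg at hlt
      exact ht.1 (hball (by simp [Real.dist_eq, abs_lt]; constructor <;> nlinarith [ht.2]))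
    linarith
  have hblt : ∀ x ∈ s, x < b x := by
    intro x hx
    obtain ⟨ε, hε, hball⟩ := Metric.isOpen_iff.1 hs x hx
    have : x + ε / 2 ≤ b x := by
      apply le_csInf (hBne x hx)
      intro t ht
      by_contra hlt
      push_neg at hlt
      exact ht.1 (hball (by simp [Real.dist_eq, abs_lt]; constructor <;> nlinarith [ht.2]))
    linarith
  have hIoo : ∀ x ∈ s, Ioo (a x) (b x) ⊆ s := by
    intro x hx t ht
    by_contra hts
    rcases lt_trichotomy t x with h | h | h
    · exact absurd (le_csSup (hAbdd x) ⟨hts, h⟩) (not_le.2 ht.1)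
    · exact hts (h ▸ hx)
    · exact absurd (csInf_le (hBbdd x) ⟨hts, h⟩) (not_le.2 ht.2)
  have hans : ∀ x ∈ s, a x ∉ s := by
    intro x hx hcon
    obtain ⟨ε, hε, hball⟩ := Metric.isOpen_iff.1 hs _ hcon
    obtain ⟨t, ht, htgt⟩ := exists_lt_of_lt_csSup (hAne x hx) (show a x - ε < a x by linarith)
    have htle : t ≤ a x := le_csSup (hAbdd x) ht
    exact ht.1 (hball (by simp [Real.dist_eq, abs_lt]; constructor <;> linarith))
  have hbns : ∀ x ∈ s, b x ∉ s := by
    intro x hx hcon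
    obtain ⟨ε, hε, hball⟩ := Metric.isOpen_iff.1 hs _ hcon
    obtain ⟨t, ht, htlt⟩ := exists_lt_of_csInf_lt (hBne x hx) (show b x < b x + ε by linarith)
    have htge : b x ≤ t := csInf_le (hBbdd x) ht
    exact ht.1 (hball (by simp [Real.dist_eq, abs_lt]; constructor <;> linarith))
  have hafr : ∀ x ∈ s, a x ∈ frontier s := by
    intro x hx
    rw [hs.frontier_eq, mem_diff]
    refine ⟨?_, hans x hx⟩
    have : a x ∈ closure (Ioo (a x) (b x)) := by
      rw [closure_Ioo (ne_of_lt ((halt x hx).trans (hblt x hx)))]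
      exact ⟨le_refl _, ((halt x hx).trans (hblt x hx)).le⟩
    exact closure_mono (hIoo x hx) this
  have hbfr : ∀ x ∈ s, b x ∈ frontier s := by
    intro x hx
    rw [hs.frontier_eq, mem_diff]
    refine ⟨?_, hbns x hx⟩
    have : b x ∈ closure (Ioo (a x) (b x)) := by
      rw [closure_Ioo (ne_of_lt ((halt x hx).trans (hblt x hx)))]
      exact ⟨((halt x hx).trans (hblt x hx)).le, le_refl _⟩
    exact closure_mono (hIoo x hx) this
  -- stability of endpoints within a component
  have hstab : ∀ x ∈ s, ∀ y ∈ Ioo (a x) (b x), a y = a x ∧ b y = b x := by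
    intro x hx y hy
    have hys : y ∈ s := hIoo x hx hy
    constructor
    · apply le_antisymm
      · apply csSup_le (hAne y hys)
        intro t ht
        by_contra hlt
        push_neg at hlt
        exact ht.1 (hIoo x hx ⟨hlt, ht.2.trans hy.2⟩)
      · exact le_csSup (hAbdd y) ⟨hans x hx, hy.1⟩
    · apply le_antisymm
      · exact csInf_le (hBbdd y) ⟨hbns x hx, hy.2⟩
      · apply le_csInf (hBne y hys)
        intro t ht
        by_contra hlt
        push_neg at hlt
        exact ht.1 (hIoo x hx ⟨hy.1.trans ht.2, hlt⟩)
  -- countable family of components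
  set T : Set (ℝ × ℝ) := (fun x => (a x, b x)) '' (s ∩ range ((↑) : ℚ → ℝ)) with hT
  have hTc : T.Countable := (countable_range _).mono inter_subset_right |>.image _
  have hcover : ⋃ p ∈ T, Ioo p.1 p.2 = s := by
    apply Subset.antisymm
    · refine iUnion₂_subset fun p hp => ?_
      obtain ⟨q, ⟨hq, _⟩, rfl⟩ := hp
      exact hIoo q hq
    · intro x hx
      obtain ⟨q, hq1, hq2⟩ := exists_rat_btwn ((halt x hx).trans (hblt x hx))
      have hqIoo : (q : ℝ) ∈ Ioo (a x) (b x) := ⟨hq1, hq2⟩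
      have hqs : (q : ℝ) ∈ s := hIoo x hx hqIoo
      obtain ⟨haq, hbq⟩ := hstab x hx _ hqIoo
      refine mem_biUnion ⟨(q : ℝ), ⟨hqs, ⟨q, rfl⟩⟩, rfl⟩ ?_
      show x ∈ Ioo (a (q:ℝ)) (b (q:ℝ))
      rw [haq, hbq]
      exact ⟨(halt x hx), (hblt x hx)⟩
  have hdisj : ∀ p ∈ T, ∀ p' ∈ T, p ≠ p' → Disjoint (Ioo p.1 p.2) (Ioo p'.1 p'.2) := by
    intro p hp p' hp' hne
    rw [Set.disjoint_iff]
    rintro y ⟨hy1, hy2⟩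
    obtain ⟨q, ⟨hq, _⟩, rfl⟩ := hp
    obtain ⟨q', ⟨hq', _⟩, rfl⟩ := hp'
    obtain ⟨e1, e2⟩ := hstab q hq y hy1
    obtain ⟨e3, e4⟩ := hstab q' hq' y hy2
    exact hne (by simp only [Prod.mk.injEq]; exact ⟨e1.symm.trans e3, e2.symm.trans e4⟩)
  -- integrability
  have hint : IntegrableOn f' s := by
    have h1 : IntegrableOn f' (closure s) volume :=
      (hf'.continuousOn : ContinuousOn f' (closure s)).integrableOn_compact
        hb.isCompact_closure
    exact h1.mono_set subset_closure
  -- each component integral is 0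
  have hcomp : ∀ p ∈ T, ∫ x in Ioo p.1 p.2, f' x = 0 := by
    intro p hp
    obtain ⟨q, ⟨hq, _⟩, rfl⟩ := hp
    have hab : a q ≤ b q := ((halt q hq).trans (hblt q hq)).le
    rw [← integral_Ioc_eq_integral_Ioo, ← intervalIntegral.integral_of_le hab]
    rw [intervalIntegral.integral_eq_sub_of_hasDerivAt (fun x _ => hf x)
      (hf'.intervalIntegrable _ _)]
    rw [h0 _ (hafr q hq), h0 _ (hbfr q hq), sub_zero]
  -- conclude
  have hTcnt : Countable T := hTc.to_subtype
  have hun : (⋃ p : T, Ioo (p : ℝ × ℝ).1 (p : ℝ × ℝ).2) = s := by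
    rw [iUnion_coe_set]; exact hcover
  have hpair : Pairwise (Function.onFun Disjoint
      (fun p : T => Ioo (p : ℝ × ℝ).1 (p : ℝ × ℝ).2)) :=
    fun p p' hne => hdisj p p.2 p' p'.2 (fun h => hne (Subtype.ext h))
  have hz : ∀ p : T, (∫ x in Ioo (p : ℝ × ℝ).1 (p : ℝ × ℝ).2, f' x) = 0 :=
    fun p => hcomp p p.2
  rw [← hun, integral_iUnion (fun _ => measurableSet_Ioo) hpair (hun ▸ hint)]
  rw [tsum_congr hz, tsum_zero]

lemma sliceDiv {n : ℕ} (i : Fin (n+1)) {Ω : Set (EuclideanSpace ℝ (Fin (n+1)))}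
    (hopen : IsOpen Ω) (hbdd : Bornology.IsBounded Ω)
    {g : EuclideanSpace ℝ (Fin (n+1)) → ℝ} (hg : ContDiff ℝ 1 g)
    (hg0 : ∀ x ∈ frontier Ω, g x = 0) :
    ∫ x in Ω, fderiv ℝ g x (EuclideanSpace.single i 1) = 0 := by
  classical
  set D : EuclideanSpace ℝ (Fin (n+1)) → ℝ :=
    fun x => fderiv ℝ g x (EuclideanSpace.single i 1) with hD
  have hDcont : Continuous D :=
    (ContinuousLinearMap.apply ℝ ℝ (EuclideanSpace.single i 1)).continuous.comp
      (hg.continuous_fderiv one_ne_zero)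
  have hDint : Integrable (Ω.indicator D) volume := by
    rw [integrable_indicator_iff hopen.measurableSet]
    exact (hDcont.continuousOn.integrableOn_compact hbdd.isCompact_closure).mono_set
      subset_closure
  set φ := (MeasurableEquiv.toLp 2 (Fin (n+1) → ℝ)).symm with hφdef
  set ψ := MeasurableEquiv.piFinSuccAbove (fun _ : Fin (n+1) => ℝ) i with hψdef
  have hφ := (EuclideanSpace.volume_preserving_symm_measurableEquiv_toLp (Fin (n+1))).symm
  have hψ := (volume_preserving_piFinSuccAbove (fun _ : Fin (n+1) => ℝ) i).symm
  rw [← integral_indicator hopen.measurableSet]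
  have step1 : ∫ x, Ω.indicator D x = ∫ y : Fin (n+1) → ℝ, Ω.indicator D (φ.symm y) :=
    (hφ.integral_comp φ.symm.measurableEmbedding _).symm
  have step2 : ∫ y : Fin (n+1) → ℝ, Ω.indicator D (φ.symm y)
      = ∫ z : ℝ × (Fin n → ℝ), Ω.indicator D (φ.symm (ψ.symm z)) :=
    (hψ.integral_comp ψ.symm.measurableEmbedding _).symm
  have hintz : Integrable (fun z : ℝ × (Fin n → ℝ) => Ω.indicator D (φ.symm (ψ.symm z)))
      ((volume : Measure ℝ).prod (volume : Measure (Fin n → ℝ))) := by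
    rw [← MeasureTheory.Measure.volume_eq_prod]
    have h1 : Integrable (fun y : Fin (n+1) → ℝ => Ω.indicator D (φ.symm y)) volume :=
      (hφ.integrable_comp_emb φ.symm.measurableEmbedding).2 hDint
    exact (hψ.integrable_comp_emb ψ.symm.measurableEmbedding).2 h1
  rw [step1, step2]
  rw [MeasureTheory.Measure.volume_eq_prod, MeasureTheory.integral_prod_symm _ hintz]
  -- inner integral vanishes for every y
  have inner0 : ∀ y : Fin n → ℝ,
      (∫ t : ℝ, Ω.indicator D (φ.symm (ψ.symm (t, y)))) = 0 := by
    intro y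
    set L : ℝ → EuclideanSpace ℝ (Fin (n+1)) := fun t => φ.symm (i.insertNth t y) with hLdef
    have hψsymm : ∀ t : ℝ, φ.symm (ψ.symm (t, y)) = L t := by intro t; rfl
    -- affine structure
    have hLeq : L = fun t => L 0 + t • (EuclideanSpace.single i 1) := by
      funext t
      ext j
      rw [PiLp.add_apply, PiLp.smul_apply, EuclideanSpace.single_apply, smul_eq_mul]
      show Fin.insertNth (α := fun _ => ℝ) i t y j
        = Fin.insertNth (α := fun _ => ℝ) i 0 y j + t * (if j = i then (1:ℝ) else 0)
      refine Fin.succAboveCases i ?_ ?_ j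
      · simp [Fin.insertNth_apply_same]
      · intro k
        simp [Fin.insertNth_apply_succAbove, (Fin.succAbove_ne i k)]
    have hLder : ∀ t : ℝ, HasDerivAt L (EuclideanSpace.single i 1) t := by
      intro t
      rw [hLeq]
      simpa using (((hasDerivAt_id t).smul_const (EuclideanSpace.single i 1)).const_add (L 0))
    have hLcont : Continuous L :=
      continuous_iff_continuousAt.2 fun t => (hLder t).continuousAt
    set s : Set ℝ := L ⁻¹' Ω with hsdef
    have hsopen : IsOpen s := hopen.preimage hLcont
    have hLi : ∀ t, L t i = t := fun t =>
      Fin.insertNth_apply_same (α := fun _ => ℝ) i t y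
    have hsbdd : Bornology.IsBounded s := by
      obtain ⟨C, hC⟩ := hbdd.subset_closedBall 0
      refine (Metric.isBounded_closedBall (x := (0:ℝ)) (r := C)).subset ?_
      intro t ht
      have h1 : ‖L t‖ ≤ C := by
        have := hC ht
        simpa [Metric.mem_closedBall, dist_zero_right] using this
      have h2 : |t| ≤ ‖L t‖ := by
        rw [EuclideanSpace.norm_eq]
        have : |t| = Real.sqrt (‖L t i‖ ^ 2) := by
          rw [hLi, Real.norm_eq_abs, sq_abs, Real.sqrt_sq_eq_abs]
        rw [this]
        apply Real.sqrt_le_sqrt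
        exact Finset.single_le_sum (f := fun j => ‖L t j‖ ^ 2)
          (fun j _ => by positivity) (Finset.mem_univ i)
      simp only [Metric.mem_closedBall, Real.dist_eq, sub_zero]
      linarith
    have hfrsub : ∀ t ∈ frontier s, L t ∈ frontier Ω := by
      intro t ht
      constructor
      · exact hLcont.closure_preimage_subset Ω ht.1
      · intro hmem
        rw [hopen.interior_eq] at hmem
        exact ht.2 (hsopen.interior_eq.symm ▸ (hmem : t ∈ s))
    have hgL : ∀ t : ℝ, HasDerivAt (fun t => g (L t)) (D (L t)) t := fun t =>
      ((hg.differentiable one_ne_zero) (L t)).hasFDerivAt.comp_hasDerivAt t (hLder t)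
    have hcont' : Continuous fun t => D (L t) := hDcont.comp hLcont
    have hkey := key1d hsopen hsbdd hgL hcont' (fun t ht => hg0 _ (hfrsub t ht))
    have hind : ∀ t : ℝ, Ω.indicator D (φ.symm (ψ.symm (t, y)))
        = s.indicator (fun t => D (L t)) t := by
      intro t
      rw [hψsymm]
      exact (Set.indicator_comp_right L (g := D)).symm
    simp only [hind]
    rw [integral_indicator hsopen.measurableSet]
    exact hkey
  simp only [inner0, integral_zero]

lemma grad_apply {k : ℕ} (f : EuclideanSpace ℝ (Fin k) → ℝ) (x : EuclideanSpace ℝ (Fin k))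
    (i : Fin k) :
    fderiv ℝ f x (EuclideanSpace.single i 1) = gradient f x i := by
  have h : (inner ℝ (gradient f x) (EuclideanSpace.single i (1:ℝ)) : ℝ)
      = fderiv ℝ f x (EuclideanSpace.single i 1) := InnerProductSpace.toDual_symm_apply
  rw [EuclideanSpace.inner_single_right] at h
  simpa using h.symm

lemma norm_sq_sum {k : ℕ} (w : EuclideanSpace ℝ (Fin k)) : ‖w‖^2 = ∑ i, (w i)^2 := by
  rw [EuclideanSpace.norm_eq, Real.sq_sqrt (by positivity)]
  simp [Real.norm_eq_abs, sq_abs]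

theorem stmt_15 (n : ℕ) (hn : 1 ≤ n) (Ω : Set (EuclideanSpace ℝ (Fin n)))
    (hopen : IsOpen Ω) (hbdd : Bornology.IsBounded Ω) (hne : Ω.Nonempty)
    (μ ν : ℝ) (hμ : 0 < μ) (hν : 0 < ν)
    (u v : EuclideanSpace ℝ (Fin n) → ℝ)
    (hu : ContDiff ℝ 2 u) (hv : ContDiff ℝ 2 v)
    (hvpos : ∀ x ∈ closure Ω, 0 < v x)
    (hupos : ∀ x ∈ closure Ω, 0 ≤ u x)
    (heq : ∀ x ∈ Ω,
      (0:ℝ) = (∑ i : Fin n, iteratedFDeriv ℝ 2 v x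
          ![EuclideanSpace.single i 1, EuclideanSpace.single i 1])
        - μ * v x + ν * u x)
    (hneumann : ∀ x ∈ frontier Ω, gradient v x = 0) :
    ∫ x in Ω, ‖gradient v x‖ ^ 2 / (v x) ^ 2 ≤ μ * (volume Ω).toReal := by
  classical
  obtain ⟨m, rfl⟩ : ∃ m, n = m + 1 := ⟨n - 1, (Nat.succ_pred_eq_of_pos hn).symm⟩
  set e : Fin (m+1) → EuclideanSpace ℝ (Fin (m+1)) :=
    fun i => EuclideanSpace.single i (1:ℝ) with he
  set V : Set (EuclideanSpace ℝ (Fin (m+1))) := {x | 0 < v x} with hV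
  have hVopen : IsOpen V := isOpen_lt continuous_const hv.continuous
  have hKV : closure Ω ⊆ V := fun x hx => hvpos x hx
  -- smooth cutoff
  obtain ⟨χ, hχ0, hχ1, hχ01⟩ :=
    exists_contMDiffMap_zero_one_nhds_of_isClosed (𝓘(ℝ, EuclideanSpace ℝ (Fin (m+1)))) (n := (⊤ : ℕ∞))
      hVopen.isClosed_compl isClosed_closure
      (Set.disjoint_left.mpr fun x hx hxK => hx (hKV hxK))
  obtain ⟨W0, hW0open, hVW0, hW0⟩ := eventually_nhdsSet_iff_exists.mp hχ0
  obtain ⟨W1, hW1open, hKW1, hW1⟩ := eventually_nhdsSet_iff_exists.mp hχ1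
  have hχsm : ContDiff ℝ 1 χ := (contMDiff_iff_contDiff.mp χ.contMDiff).of_le (mod_cast le_top)
  -- the vector field
  set g : Fin (m+1) → EuclideanSpace ℝ (Fin (m+1)) → ℝ :=
    fun i x => χ x * (fderiv ℝ v x (e i) * (v x)⁻¹) with hg
  have hDv : ∀ i, ContDiff ℝ 1 (fun x => fderiv ℝ v x (e i)) := fun i =>
    (hv.fderiv_right (le_refl 2)).clm_apply contDiff_const
  have hgiC : ∀ i, ContDiff ℝ 1 (g i) := by
    intro i
    rw [contDiff_iff_contDiffAt]
    intro x
    by_cases hx : x ∈ V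
    · exact hχsm.contDiffAt.mul ((hDv i).contDiffAt.mul
        (((hv.of_le one_le_two).contDiffAt).inv (ne_of_gt hx)))
    · have hxW0 : x ∈ W0 := hVW0 hx
      refine contDiffAt_const (c := 0) |>.congr_of_eventuallyEq ?_
      filter_upwards [hW0open.mem_nhds hxW0] with y hy
      simp [hg, hW0 y hy]
  have hgi0 : ∀ i, ∀ x ∈ frontier Ω, g i x = 0 := by
    intro i x hx
    have h1 : fderiv ℝ v x (e i) = gradient v x i := grad_apply v x i
    rw [hneumann x hx] at h1
    simp only [hg]
    rw [h1]
    simp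
  have hdiv0 : ∀ i, ∫ x in Ω, fderiv ℝ (g i) x (e i) = 0 := fun i =>
    sliceDiv i hopen hbdd (hgiC i) (hgi0 i)
  -- pointwise computation on Ω
  have hpt : ∀ x ∈ Ω, (∑ i, fderiv ℝ (g i) x (e i))
      = (μ * v x - ν * u x) * (v x)⁻¹ - ‖gradient v x‖^2 * ((v x)^2)⁻¹ := by
    intro x hx
    have hxW1 : x ∈ W1 := hKW1 (subset_closure hx)
    have hxV : 0 < v x := hvpos x (subset_closure hx)
    have hfi : ∀ i, fderiv ℝ (g i) x (e i)
        = fderiv ℝ (fderiv ℝ v) x (e i) (e i) * (v x)⁻¹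
          - fderiv ℝ v x (e i) * fderiv ℝ v x (e i) * ((v x)^2)⁻¹ := by
      intro i
      have hev : g i =ᶠ[nhds x] (fun y => fderiv ℝ v y (e i) * (v y)⁻¹) := by
        filter_upwards [(hW1open.inter hVopen).mem_nhds ⟨hxW1, hxV⟩] with y hy
        simp [hg, hW1 y hy.1]
      rw [hev.fderiv_eq]
      have ha : HasFDerivAt (fun y => fderiv ℝ v y (e i))
          ((ContinuousLinearMap.apply ℝ ℝ (e i)).comp (fderiv ℝ (fderiv ℝ v) x)) x :=
        (ContinuousLinearMap.apply ℝ ℝ (e i)).hasFDerivAt.comp x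
          (((hv.fderiv_right (le_refl 2)).differentiable one_ne_zero) x).hasFDerivAt
      have hbv : HasFDerivAt v (fderiv ℝ v x) x :=
        ((hv.differentiable two_ne_zero) x).hasFDerivAt
      have hbinv : HasFDerivAt (fun y => (v y)⁻¹) ((-((v x)^2)⁻¹) • fderiv ℝ v x) x :=
        (hasDerivAt_inv (ne_of_gt hxV)).comp_hasFDerivAt x hbv
      have hm : HasFDerivAt (fun y => fderiv ℝ v y (e i) * (v y)⁻¹) _ x := ha.mul hbinv
      rw [hm.fderiv]
      simp only [ContinuousLinearMap.add_apply, ContinuousLinearMap.smul_apply,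
        ContinuousLinearMap.comp_apply, ContinuousLinearMap.apply_apply, smul_eq_mul]
      ring
    have hsum2 : ∑ i, fderiv ℝ (fderiv ℝ v) x (e i) (e i) = μ * v x - ν * u x := by
      have h2 : ∀ i : Fin (m+1), iteratedFDeriv ℝ 2 v x ![e i, e i]
          = fderiv ℝ (fderiv ℝ v) x (e i) (e i) := by
        intro i
        rw [iteratedFDeriv_two_apply]
        simp
      have := heq x hx
      have h2' : ∀ i : Fin (m+1), iteratedFDeriv ℝ 2 v x
          ![EuclideanSpace.single i 1, EuclideanSpace.single i 1]
          = fderiv ℝ (fderiv ℝ v) x (e i) (e i) := h2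
      simp only [h2'] at this
      linarith
    have hnorm : ‖gradient v x‖^2 = ∑ i, fderiv ℝ v x (e i) * fderiv ℝ v x (e i) := by
      rw [norm_sq_sum]
      refine Finset.sum_congr rfl fun i _ => ?_
      rw [grad_apply v x i]; ring
    calc ∑ i, fderiv ℝ (g i) x (e i)
        = ∑ i, (fderiv ℝ (fderiv ℝ v) x (e i) (e i) * (v x)⁻¹
            - fderiv ℝ v x (e i) * fderiv ℝ v x (e i) * ((v x)^2)⁻¹) :=
          Finset.sum_congr rfl fun i _ => hfi i
      _ = (∑ i, fderiv ℝ (fderiv ℝ v) x (e i) (e i)) * (v x)⁻¹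
            - (∑ i, fderiv ℝ v x (e i) * fderiv ℝ v x (e i)) * ((v x)^2)⁻¹ := by
          rw [Finset.sum_sub_distrib, Finset.sum_mul, Finset.sum_mul]
      _ = (μ * v x - ν * u x) * (v x)⁻¹ - ‖gradient v x‖^2 * ((v x)^2)⁻¹ := by
          rw [hsum2, hnorm]
  -- main pointwise identity
  have hmain : ∀ x ∈ Ω, ‖gradient v x‖^2 / (v x)^2
      = (μ - ν * u x * (v x)⁻¹) - ∑ i, fderiv ℝ (g i) x (e i) := by
    intro x hx
    have hvx : 0 < v x := hvpos x (subset_closure hx)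
    rw [hpt x hx]
    field_simp
    ring
  -- integrability
  have hKcomp : IsCompact (closure Ω) := hbdd.isCompact_closure
  have hvol : volume Ω < ⊤ :=
    lt_of_le_of_lt (measure_mono subset_closure) hKcomp.measure_lt_top
  have hIfd : ∀ i, IntegrableOn (fun x => fderiv ℝ (g i) x (e i)) Ω := by
    intro i
    have hc : Continuous fun x => fderiv ℝ (g i) x (e i) :=
      (ContinuousLinearMap.apply ℝ ℝ (e i)).continuous.comp
        ((hgiC i).continuous_fderiv one_ne_zero)
    exact (hc.continuousOn.integrableOn_compact hKcomp).mono_set subset_closure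
  have hIP : IntegrableOn (fun x => μ - ν * u x * (v x)⁻¹) Ω := by
    have hc : ContinuousOn (fun x => μ - ν * u x * (v x)⁻¹) (closure Ω) :=
      continuousOn_const.sub ((continuousOn_const.mul hu.continuous.continuousOn).mul
        (hv.continuous.continuousOn.inv₀ fun x hx => ne_of_gt (hvpos x hx)))
    exact (hc.integrableOn_compact hKcomp).mono_set subset_closure
  have hIS : IntegrableOn (fun x => ∑ i, fderiv ℝ (g i) x (e i)) Ω :=
    integrable_finset_sum _ fun i _ => hIfd i
  calc ∫ x in Ω, ‖gradient v x‖^2 / (v x)^2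
      = ∫ x in Ω, ((μ - ν * u x * (v x)⁻¹) - ∑ i, fderiv ℝ (g i) x (e i)) :=
        setIntegral_congr_fun hopen.measurableSet hmain
    _ = (∫ x in Ω, (μ - ν * u x * (v x)⁻¹)) - ∫ x in Ω, ∑ i, fderiv ℝ (g i) x (e i) :=
        integral_sub hIP hIS
    _ = ∫ x in Ω, (μ - ν * u x * (v x)⁻¹) := by
        rw [integral_finset_sum _ fun i _ => hIfd i]
        simp [hdiv0]
    _ ≤ ∫ _x in Ω, μ := by
        refine setIntegral_mono_on hIP ?_ hopen.measurableSet fun x hx => ?_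
        · exact integrableOn_const hvol.ne
        · have h1 : 0 ≤ u x := hupos x (subset_closure hx)
          have h2 : 0 < v x := hvpos x (subset_closure hx)
          have : 0 ≤ ν * u x * (v x)⁻¹ := by positivity
          linarith
    _ = μ * (volume Ω).toReal := by
        rw [setIntegral_const, smul_eq_mul, mul_comm, Measure.real]
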